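/- The fast-growing hierarchy satisfies the recursion equations: F_{0,f}(x) = f(x); F_{α+1,f}(x) = F_{α,f}^{(x+1)}(1) (the (x+1)-fold iterate applied to 1); and F_{λ,f}(x) = F_{λ[x],f}(x) for λ a limit, whenever the relevant computations terminate; where F_{α,f} is defined via the iterated one-step computation K_f. -/

import Mathlib

open Ordinal

def Kstep (f : ℕ → ℕ) : List ONote × ℕ → List ONote × ℕ
  | ([], x) => ([], x)
  | (α :: rest, x) =>
    match α.fundamentalSequence with
    | Sum.inl none => (rest, f x)
    | Sum.inl (some β) => (List.replicate (x + 1) β ++ rest, 1)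
    | Sum.inr g => (g x :: rest, x)

noncomputable def hOrd (σ : List ONote) : Ordinal.{0} :=
  σ.foldr (fun α acc => acc + omega0 ^ α.repr) 0

def Fval (f : ℕ → ℕ) (α : ONote) (x y : ℕ) : Prop :=
  ∃ l : ℕ, (Kstep f)^[l] ([α], x) = ([], y)

/-- Run predicate on general stacks. -/
def Run (f : ℕ → ℕ) (σ : List ONote) (x y : ℕ) : Prop :=
  ∃ l : ℕ, (Kstep f)^[l] (σ, x) = ([], y)

lemma kstep_nil (f : ℕ → ℕ) (x : ℕ) (l : ℕ) : (Kstep f)^[l] ([], x) = ([], x) :=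
  Function.iterate_fixed rfl l

lemma kstep_cons (f : ℕ → ℕ) (a : ONote) (rest σ : List ONote) (x : ℕ) :
    Kstep f (a :: (rest ++ σ), x) =
      ((Kstep f (a :: rest, x)).1 ++ σ, (Kstep f (a :: rest, x)).2) := by
  rcases h : a.fundamentalSequence with (_ | β) | g <;>
    simp [Kstep, h, List.append_assoc]

lemma run_split (f : ℕ → ℕ) : ∀ (l : ℕ) (τ σ : List ONote) (x y : ℕ),
    (Kstep f)^[l] (τ ++ σ, x) = ([], y) →
    ∃ z, Run f τ x z ∧ Run f σ z y := by
  intro l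
  induction l with
  | zero =>
    intro τ σ x y h
    simp only [Function.iterate_zero, id_eq, Prod.mk.injEq] at h
    obtain ⟨h1, h2⟩ := h
    rcases List.append_eq_nil_iff.mp h1 with ⟨hτ, hσ⟩
    exact ⟨x, ⟨0, by simp [hτ]⟩, ⟨0, by simp [hσ, h2]⟩⟩
  | succ l ih =>
    intro τ σ x y h
    cases τ with
    | nil => exact ⟨x, ⟨0, rfl⟩, ⟨l + 1, h⟩⟩
    | cons a rest =>
      rw [Function.iterate_succ_apply, List.cons_append, kstep_cons] at h
      obtain ⟨z, ⟨l1, h1⟩, h2⟩ :=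
        ih (Kstep f (a :: rest, x)).1 σ (Kstep f (a :: rest, x)).2 y h
      exact ⟨z, ⟨l1 + 1, by rw [Function.iterate_succ_apply]; exact h1⟩, h2⟩

lemma run_shift (f : ℕ → ℕ) (σ : List ONote) : ∀ (l : ℕ) (τ : List ONote) (x z : ℕ),
    (Kstep f)^[l] (τ, x) = ([], z) →
    ∃ l', (Kstep f)^[l'] (τ ++ σ, x) = (σ, z) := by
  intro l
  induction l with
  | zero =>
    intro τ x z h
    simp only [Function.iterate_zero, id_eq, Prod.mk.injEq] at h
    exact ⟨0, by simp [h.1, h.2]⟩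
  | succ l ih =>
    intro τ x z h
    cases τ with
    | nil =>
      rw [kstep_nil] at h
      simp only [Prod.mk.injEq] at h
      exact ⟨0, by simp [h.2]⟩
    | cons a rest =>
      rw [Function.iterate_succ_apply] at h
      obtain ⟨l', h'⟩ := ih (Kstep f (a :: rest, x)).1 (Kstep f (a :: rest, x)).2 z h
      refine ⟨l' + 1, ?_⟩
      rw [Function.iterate_succ_apply, List.cons_append, kstep_cons]
      exact h'

lemma run_append (f : ℕ → ℕ) {τ σ : List ONote} {x z y : ℕ}
    (h1 : Run f τ x z) (h2 : Run f σ z y) : Run f (τ ++ σ) x y := by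
  obtain ⟨l1, h1⟩ := h1
  obtain ⟨l2, h2⟩ := h2
  obtain ⟨l', h'⟩ := run_shift f σ l1 τ x z h1
  exact ⟨l2 + l', by rw [Function.iterate_add_apply, h', h2]⟩

lemma run_nil (f : ℕ → ℕ) (x y : ℕ) : Run f [] x y ↔ x = y := by
  constructor
  · rintro ⟨l, h⟩
    rw [kstep_nil] at h
    exact ((Prod.mk.injEq ..).mp h).2
  · rintro rfl; exact ⟨0, rfl⟩

lemma run_replicate (f : ℕ → ℕ) (α : ONote) : ∀ (n : ℕ) (x y : ℕ),
    Run f (List.replicate n α) x y ↔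
      ∃ z : ℕ → ℕ, z 0 = x ∧ (∀ i < n, Fval f α (z i) (z (i + 1))) ∧ y = z n := by
  intro n
  induction n with
  | zero =>
    intro x y
    simp only [List.replicate_zero, run_nil]
    constructor
    · rintro rfl
      exact ⟨fun _ => x, rfl, fun i hi => absurd hi (Nat.not_lt_zero i), rfl⟩
    · rintro ⟨z, hz0, _, rfl⟩; exact hz0.symm
  | succ n ih =>
    intro x y
    have hrep : List.replicate (n + 1) α = [α] ++ List.replicate n α := by
      simp [List.replicate_succ]
    constructor
    · intro h
      rw [hrep] at h
      obtain ⟨l, hl⟩ := h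
      obtain ⟨w, hw1, hw2⟩ := run_split f l [α] (List.replicate n α) x y hl
      obtain ⟨z, hz0, hzc, hzy⟩ := (ih w y).mp hw2
      refine ⟨fun i => match i with | 0 => x | (i + 1) => z i, rfl, ?_, hzy⟩
      intro i hi
      match i with
      | 0 => exact show Fval f α x (z 0) by rw [hz0]; exact hw1
      | (j + 1) => exact hzc j (Nat.lt_of_succ_lt_succ hi)
    · rintro ⟨z, hz0, hzc, rfl⟩
      rw [hrep]
      refine run_append f (hz0 ▸ hzc 0 (Nat.succ_pos n)) ?_
      exact (ih (z 1) (z (n + 1))).mpr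
        ⟨fun i => z (i + 1), rfl, fun i hi => hzc (i + 1) (Nat.succ_lt_succ hi), rfl⟩

lemma fs_succ {α : ONote} (h : α.NF) :
    (α + 1).fundamentalSequence = Sum.inl (some α) := by
  have hnf : (α + 1).NF := ONote.add_nf α 1
  have hrepr : (α + 1).repr = α.repr + 1 := by
    rw [@ONote.repr_add α 1 h ONote.nf_one]; simp
  rcases hfs : (α + 1).fundamentalSequence with (_ | β) | g
  · have := hfs ▸ ONote.fundamentalSequence_has_prop (α + 1)
    rw [ONote.fundamentalSequenceProp_inl_none] at this
    rw [this] at hrepr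
    simp at hrepr
    exact absurd hrepr.symm (succ_ne_zero _)
  · have := hfs ▸ ONote.fundamentalSequence_has_prop (α + 1)
    rw [ONote.fundamentalSequenceProp_inl_some] at this
    obtain ⟨h1, h2⟩ := this
    have hβnf : β.NF := h2 hnf
    have : β.repr = α.repr := by
      rw [hrepr] at h1
      exact Order.succ_injective (by rw [add_one_eq_succ] at h1; exact h1.symm)
    have : β = α := (@ONote.repr_inj β α hβnf h).mp this
    rw [this]
  · have := hfs ▸ ONote.fundamentalSequence_has_prop (α + 1)
    rw [ONote.fundamentalSequenceProp_inr] at this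
    have hlim := this.1
    rw [hrepr] at hlim
    rw [add_one_eq_succ] at hlim
    exact absurd hlim (Order.not_isSuccLimit_succ _)

theorem stmt_17 (f : ℕ → ℕ) :
    (∀ x y : ℕ, Fval f 0 x y ↔ y = f x) ∧
    (∀ (α : ONote) (x y : ℕ), α.NF →
      (Fval f (α + 1) x y ↔
        ∃ z : ℕ → ℕ, z 0 = 1 ∧ (∀ i < x + 1, Fval f α (z i) (z (i + 1))) ∧
          y = z (x + 1))) ∧
    (∀ (α : ONote) (g : ℕ → ONote) (x y : ℕ), α.NF →
      α.fundamentalSequence = Sum.inr g → (Fval f α x y ↔ Fval f (g x) x y)) := by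
  refine ⟨?_, ?_, ?_⟩
  · intro x y
    have hstep : Kstep f ([0], x) = ([], f x) := by
      simp [Kstep, ONote.fundamentalSequence]
    constructor
    · rintro ⟨l, hl⟩
      cases l with
      | zero => simp at hl
      | succ l =>
        rw [Function.iterate_succ_apply, hstep, kstep_nil] at hl
        exact (((Prod.mk.injEq ..).mp hl).2).symm
    · rintro rfl
      exact ⟨1, by rw [Function.iterate_one, hstep]⟩
  · intro α x y hnf
    have hstep : Kstep f ([α + 1], x) = (List.replicate (x + 1) α, 1) := by
      simp [Kstep, fs_succ hnf]
    constructor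
    · rintro ⟨l, hl⟩
      cases l with
      | zero => simp at hl
      | succ l =>
        rw [Function.iterate_succ_apply, hstep] at hl
        exact (run_replicate f α (x + 1) 1 y).mp ⟨l, hl⟩
    · intro h
      obtain ⟨l, hl⟩ := (run_replicate f α (x + 1) 1 y).mpr h
      exact ⟨l + 1, by rw [Function.iterate_succ_apply, hstep]; exact hl⟩
  · intro α g x y _ hfs
    have hstep : Kstep f ([α], x) = ([g x], x) := by simp [Kstep, hfs]
    constructor
    · rintro ⟨l, hl⟩
      cases l with
      | zero => simp at hl
      | succ l =>
        rw [Function.iterate_succ_apply, hstep] at hl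
        exact ⟨l, hl⟩
    · rintro ⟨l, hl⟩
      exact ⟨l + 1, by rw [Function.iterate_succ_apply, hstep]; exact hl⟩
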